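/- Let G be a graph whose vertex set is partitioned into h pairwise disjoint sets V_1, ..., V_h, each of size s, where s is a positive even integer. Suppose that for each pair of indices 1 <= i < j <= h, there are at most s^2/h^2 edges with one endpoint in V_i and the other in V_j. Then there exist s/2 pairwise disjoint independent sets I_1, ..., I_{s/2} in G such that each I_t contains exactly one vertex from each set V_i. -/

import Mathlib

open Finset

lemma perm_pair_count {h s : ℕ} (i j : Fin h) (hij : i ≠ j) (a b : Fin s) :
    ((Finset.univ : Finset (Fin h → Equiv.Perm (Fin s))).filter
      (fun π => π i a = π j b)).card * s
      = Fintype.card (Fin h → Equiv.Perm (Fin s)) := by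
  classical
  have E : {π : Fin h → Equiv.Perm (Fin s) // π i a = π j b} × Fin s
      ≃ (Fin h → Equiv.Perm (Fin s)) := by
    refine ⟨fun x => Function.update x.1.1 j (Equiv.swap (x.1.1 i a) x.2 * x.1.1 j),
      fun π' => (⟨Function.update π' j (Equiv.swap (π' i a) (π' j b) * π' j), ?_⟩, π' j b),
      ?_, ?_⟩
    · simp [Function.update_self, Function.update_of_ne hij]
    · rintro ⟨⟨π, hπ⟩, t⟩
      have h1 : Function.update π j (Equiv.swap (π i a) t * π j) i a = π i a := by
        simp [Function.update_of_ne hij]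
      have h2 : (Equiv.swap (π i a) t * π j) b = t := by
        simp only [Equiv.Perm.mul_apply, ← hπ, Equiv.swap_apply_left]
      simp only [Function.update_self, h1, h2, Prod.mk.injEq, Subtype.mk.injEq,
        Function.update_idem, ← mul_assoc, Equiv.swap_mul_self, one_mul,
        Function.update_eq_self, and_self]
    · intro π'
      simp only [Function.update_of_ne hij, Function.update_self, Function.update_idem,
        ← mul_assoc, Equiv.swap_mul_self, one_mul, Function.update_eq_self]
  have := Fintype.card_congr E
  simp only [Fintype.card_prod, Fintype.card_fin, Fintype.card_subtype] at this
  exact this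

theorem stmt3 {V : Type} [Fintype V] [DecidableEq V]
    (G : SimpleGraph V) [DecidableRel G.Adj]
    (h s : ℕ) (hs : 0 < s) (hse : Even s)
    (P : Fin h → Finset V)
    (hdisj : ∀ i j, i ≠ j → Disjoint (P i) (P j))
    (hcover : ∀ v : V, ∃ i, v ∈ P i)
    (hsize : ∀ i, (P i).card = s)
    (hedges : ∀ i j : Fin h, i < j →
      ((P i ×ˢ P j).filter (fun p => G.Adj p.1 p.2)).card * h ^ 2 ≤ s ^ 2) :
    ∃ I : Fin (s / 2) → Finset V,
      (∀ t t', t ≠ t' → Disjoint (I t) (I t')) ∧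
      (∀ t, ∀ u ∈ I t, ∀ v ∈ I t, ¬ G.Adj u v) ∧
      (∀ t i, (I t ∩ P i).card = 1) := by
  classical
  rcases Nat.eq_zero_or_pos h with hh | hh
  · subst hh
    refine ⟨fun _ => ∅, ?_, ?_, ?_⟩
    · intro t t' _; simp
    · intro t u hu; simp at hu
    · intro t i; exact absurd i.2 (by simp)
  -- setup
  set idx : V → Fin h := fun v => (hcover v).choose with hidxdef
  have hidx : ∀ v, v ∈ P (idx v) := fun v => (hcover v).choose_spec
  have hidx_eq : ∀ v i, v ∈ P i → idx v = i := by
    intro v i hv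
    by_contra hne
    exact (Finset.disjoint_left.1 (hdisj _ _ hne)) (hidx v) hv
  set e : ∀ i : Fin h, (P i : Finset V) ≃ Fin s :=
    fun i => (P i).equivFin.trans (finCongr (hsize i)) with hedef
  set lab : (Fin h → Equiv.Perm (Fin s)) → V → Fin s :=
    fun π v => π (idx v) (e (idx v) ⟨v, hidx v⟩) with hlabdef
  have lab_eq : ∀ π v (i : Fin h) (hv : v ∈ P i), lab π v = π i (e i ⟨v, hv⟩) := by
    intro π v i hv
    have := hidx_eq v i hv
    subst this
    rfl
  have lab_inj : ∀ π (i : Fin h) u v, u ∈ P i → v ∈ P i → lab π u = lab π v → u = v := by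
    intro π i u v hu hv huv
    rw [lab_eq π u i hu, lab_eq π v i hv] at huv
    have := (e i).injective ((π i).injective huv)
    exact Subtype.ext_iff.1 this
  -- the class of label t
  set C : (Fin h → Equiv.Perm (Fin s)) → Fin s → Finset V :=
    fun π t => Finset.univ.filter (fun v => lab π v = t) with hCdef
  have hCP : ∀ π t i, (C π t ∩ P i).card = 1 := by
    intro π t i
    set v₀ : V := ((e i).symm ((π i).symm t) : V) with hv₀
    have hv₀P : v₀ ∈ P i := ((e i).symm ((π i).symm t)).2
    have hlabv₀ : lab π v₀ = t := by
      rw [lab_eq π v₀ i hv₀P]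
      have : (⟨v₀, hv₀P⟩ : (P i : Finset V)) = (e i).symm ((π i).symm t) := by
        exact Subtype.ext rfl
      rw [this]
      simp
    rw [Finset.card_eq_one]
    refine ⟨v₀, ?_⟩
    ext v
    simp only [Finset.mem_inter, hCdef, Finset.mem_filter, Finset.mem_univ, true_and,
      Finset.mem_singleton]
    constructor
    · rintro ⟨hl, hvP⟩
      exact lab_inj π i v v₀ hvP hv₀P (by rw [hl, hlabv₀])
    · rintro rfl; exact ⟨hlabv₀, hv₀P⟩
  -- cross pairs
  set A : Finset (V × V) :=
    Finset.univ.filter (fun p => G.Adj p.1 p.2 ∧ idx p.1 < idx p.2) with hAdef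
  -- bad pairs for a labeling
  set Bad : (Fin h → Equiv.Perm (Fin s)) → Finset (V × V) :=
    fun π => A.filter (fun p => lab π p.1 = lab π p.2) with hBaddef
  set M : ℕ := Fintype.card (Fin h → Equiv.Perm (Fin s)) with hMdef
  -- counting: total bad over all labelings
  have step1 : ∑ π : Fin h → Equiv.Perm (Fin s), (Bad π).card
      = ∑ p ∈ A, (Finset.univ.filter
          (fun π : Fin h → Equiv.Perm (Fin s) => lab π p.1 = lab π p.2)).card := by
    simp only [hBaddef, Finset.card_filter]
    rw [Finset.sum_comm]
  have step2 : ∀ p ∈ A, (Finset.univ.filter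
      (fun π : Fin h → Equiv.Perm (Fin s) => lab π p.1 = lab π p.2)).card * s = M := by
    intro p hp
    simp only [hAdef, Finset.mem_filter] at hp
    obtain ⟨-, hadj, hlt⟩ := hp
    have hne : idx p.1 ≠ idx p.2 := ne_of_lt hlt
    have : ∀ π : Fin h → Equiv.Perm (Fin s),
        (lab π p.1 = lab π p.2) ↔
        (π (idx p.1) (e (idx p.1) ⟨p.1, hidx p.1⟩) = π (idx p.2) (e (idx p.2) ⟨p.2, hidx p.2⟩)) :=
      fun π => Iff.rfl
    simp only [this]
    exact perm_pair_count (idx p.1) (idx p.2) hne _ _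
  have step3 : (∑ π : Fin h → Equiv.Perm (Fin s), (Bad π).card) * s = A.card * M := by
    rw [step1, Finset.sum_mul]
    rw [Finset.sum_congr rfl step2]
    simp [Finset.sum_const, mul_comm]
  have step4 : A.card * 2 ≤ s ^ 2 := by
    set B : Finset (Fin h × Fin h) := Finset.univ.filter (fun q => q.1 < q.2) with hBdef
    set F : Fin h × Fin h → Finset (V × V) :=
      fun q => (P q.1 ×ˢ P q.2).filter (fun p => G.Adj p.1 p.2) with hFdef
    have hmemF : ∀ q p, p ∈ F q → idx p.1 = q.1 ∧ idx p.2 = q.2 ∧ G.Adj p.1 p.2 := by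
      intro q p hp
      simp only [hFdef, Finset.mem_filter, Finset.mem_product] at hp
      exact ⟨hidx_eq _ _ hp.1.1, hidx_eq _ _ hp.1.2, hp.2⟩
    have hA_eq : A = B.biUnion F := by
      ext p
      simp only [hAdef, Finset.mem_filter, Finset.mem_univ, true_and, Finset.mem_biUnion]
      constructor
      · rintro ⟨hadj, hlt⟩
        refine ⟨(idx p.1, idx p.2), ?_, ?_⟩
        · simp [hBdef, hlt]
        · simp only [hFdef, Finset.mem_filter, Finset.mem_product]
          exact ⟨⟨hidx p.1, hidx p.2⟩, hadj⟩
      · rintro ⟨q, hq, hp⟩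
        obtain ⟨h1, h2, h3⟩ := hmemF q p hp
        simp only [hBdef, Finset.mem_filter, Finset.mem_univ, true_and] at hq
        exact ⟨h3, by rw [h1, h2]; exact hq⟩
    have hdisjF : ∀ q ∈ B, ∀ q' ∈ B, q ≠ q' → Disjoint (F q) (F q') := by
      intro q _ q' _ hne
      rw [Finset.disjoint_left]
      intro p hp hp'
      obtain ⟨h1, h2, -⟩ := hmemF q p hp
      obtain ⟨h1', h2', -⟩ := hmemF q' p hp'
      exact hne (Prod.ext (h1 ▸ h1'.symm ▸ rfl) (h2 ▸ h2'.symm ▸ rfl))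
    have hBcard : B.card * 2 ≤ h * h := by
      have hdisjB : Disjoint B (B.image Prod.swap) := by
        rw [Finset.disjoint_left]
        intro q hq hq'
        simp only [hBdef, Finset.mem_filter, Finset.mem_univ, true_and] at hq
        obtain ⟨r, hr, hrq⟩ := Finset.mem_image.1 hq'
        simp only [hBdef, Finset.mem_filter, Finset.mem_univ, true_and] at hr
        subst hrq
        exact absurd hq (not_lt.2 hr.le)
      have himg : (B.image Prod.swap).card = B.card :=
        Finset.card_image_of_injective _ Prod.swap_injective
      calc B.card * 2 = B.card + (B.image Prod.swap).card := by rw [himg]; ring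
        _ = (B ∪ B.image Prod.swap).card := (Finset.card_union_of_disjoint hdisjB).symm
        _ ≤ (Finset.univ : Finset (Fin h × Fin h)).card := Finset.card_le_card (Finset.subset_univ _)
        _ = h * h := by simp [Fintype.card_prod]
    have hAcard : A.card = ∑ q ∈ B, (F q).card := by
      rw [hA_eq]; exact Finset.card_biUnion hdisjF
    have key : A.card * 2 * h ^ 2 ≤ s ^ 2 * h ^ 2 := by
      calc A.card * 2 * h ^ 2 = (∑ q ∈ B, (F q).card * h ^ 2) * 2 := by
            rw [hAcard, ← Finset.sum_mul]; ring
        _ ≤ (∑ _q ∈ B, s ^ 2) * 2 := by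
            refine Nat.mul_le_mul_right 2 (Finset.sum_le_sum ?_)
            intro q hq
            simp only [hBdef, Finset.mem_filter, Finset.mem_univ, true_and] at hq
            exact hedges q.1 q.2 hq
        _ = s ^ 2 * (B.card * 2) := by rw [Finset.sum_const]; ring
        _ ≤ s ^ 2 * (h * h) := Nat.mul_le_mul_left _ hBcard
        _ = s ^ 2 * h ^ 2 := by ring
    exact Nat.le_of_mul_le_mul_right key (by positivity)
  have hM : 0 < M := Fintype.card_pos
  -- exists a labeling with few bad pairs
  have hs2 : 2 * (s / 2) = s := Nat.two_mul_div_two_of_even hse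
  have step6 : ∃ π : Fin h → Equiv.Perm (Fin s), (Bad π).card ≤ s / 2 := by
    have hsum : (∑ π : Fin h → Equiv.Perm (Fin s), (Bad π).card)
        ≤ ∑ _π : Fin h → Equiv.Perm (Fin s), s / 2 := by
      have h1 : (∑ π : Fin h → Equiv.Perm (Fin s), (Bad π).card) * (s * 2)
          ≤ (s / 2) * M * (s * 2) := by
        calc (∑ π : Fin h → Equiv.Perm (Fin s), (Bad π).card) * (s * 2)
            = ((∑ π : Fin h → Equiv.Perm (Fin s), (Bad π).card) * s) * 2 := by ring
          _ = A.card * M * 2 := by rw [step3]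
          _ = (A.card * 2) * M := by ring
          _ ≤ s ^ 2 * M := Nat.mul_le_mul_right M step4
          _ = (s / 2) * M * (s * 2) := by
              have hq : s / 2 * 2 = s := Nat.div_mul_cancel hse.two_dvd
              calc s ^ 2 * M = s * (s * M) := by ring
                _ = (s / 2 * 2) * (s * M) := by rw [hq]
                _ = (s / 2) * M * (s * 2) := by ring
      have := Nat.le_of_mul_le_mul_right h1 (by positivity)
      simpa [Finset.sum_const, Finset.card_univ, ← hMdef, mul_comm] using this
    obtain ⟨π, -, hπ⟩ := Finset.exists_le_of_sum_le Finset.univ_nonempty hsum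
    exact ⟨π, hπ⟩
  obtain ⟨π, hπ⟩ := step6
  -- good classes
  set Gd : Finset (Fin s) :=
    Finset.univ.filter (fun t => ∀ p ∈ Bad π, lab π p.1 ≠ t) with hGddef
  have hGdcard : s / 2 ≤ Gd.card := by
    have hsub : (Finset.univ : Finset (Fin s)) ⊆ Gd ∪ (Bad π).image (fun p => lab π p.1) := by
      intro t _
      by_cases ht : t ∈ Gd
      · exact Finset.mem_union_left _ ht
      · simp only [hGddef, Finset.mem_filter, Finset.mem_univ, true_and, not_forall] at ht
        obtain ⟨p, hp, hlp⟩ := ht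
        exact Finset.mem_union_right _ (Finset.mem_image.2 ⟨p, hp, not_not.1 hlp⟩)
    have h1 : s ≤ Gd.card + s / 2 := by
      calc s = (Finset.univ : Finset (Fin s)).card := by simp
        _ ≤ (Gd ∪ (Bad π).image (fun p => lab π p.1)).card := Finset.card_le_card hsub
        _ ≤ Gd.card + ((Bad π).image (fun p => lab π p.1)).card := Finset.card_union_le _ _
        _ ≤ Gd.card + (Bad π).card := by
            exact Nat.add_le_add_left (Finset.card_image_le) _
        _ ≤ Gd.card + s / 2 := Nat.add_le_add_left hπ _
    omega
  obtain ⟨T, hTsub, hTcard⟩ := Finset.exists_subset_card_eq hGdcard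
  set σ : Fin (s / 2) → Fin s := fun k => (T.equivFin.symm (Fin.cast hTcard.symm k) : Fin s)
    with hσdef
  have hσinj : Function.Injective σ := by
    intro a b hab
    have := T.equivFin.symm.injective (Subtype.ext hab)
    exact Fin.ext (by simpa using congrArg Fin.val this)
  have hσGd : ∀ k, σ k ∈ Gd := fun k => hTsub (T.equivFin.symm (Fin.cast hTcard.symm k)).2
  refine ⟨fun k => C π (σ k), ?_, ?_, ?_⟩
  · intro t t' htt'
    rw [Finset.disjoint_left]
    intro v hv hv'
    simp only [hCdef, Finset.mem_filter] at hv hv'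
    exact htt' (hσinj (hv.2.symm.trans hv'.2))
  · intro t u hu v hv hadj
    simp only [hCdef, Finset.mem_filter, Finset.mem_univ, true_and] at hu hv
    have hGdσ := hσGd t
    simp only [hGddef, Finset.mem_filter, Finset.mem_univ, true_and] at hGdσ
    rcases lt_trichotomy (idx u) (idx v) with hlt | heq | hgt
    · have hmem : (u, v) ∈ Bad π := by
        simp only [hBaddef, hAdef, Finset.mem_filter, Finset.mem_univ, true_and]
        exact ⟨⟨hadj, hlt⟩, hu.trans hv.symm⟩
      exact hGdσ (u, v) hmem hu
    · have := lab_inj π (idx v) u v (heq ▸ hidx u) (hidx v) (hu.trans hv.symm)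
      exact G.loopless.irrefl v (this ▸ hadj)
    · have hmem : (v, u) ∈ Bad π := by
        simp only [hBaddef, hAdef, Finset.mem_filter, Finset.mem_univ, true_and]
        exact ⟨⟨hadj.symm, hgt⟩, hv.trans hu.symm⟩
      exact hGdσ (v, u) hmem hv
  · intro t i; exact hCP π (σ t) i
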